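/- Let ζ ∈ k be a primitive 4th root of unity, let A = k[u]/(u⁴ − 1), and let (σ, δ) be the T(4,2,1)-module-algebra structure on A with σ(u) = ζ·u and δ(u) = γ·u³, where γ² = 2ζ. Then there exist NO k-linear maps T_G, T_X: A → A satisfying all of the following conditions (which together say that the action of T(4,2,1) extends to a D(T(4,2,1))-module-algebra structure on A): T_G(1_A) = 1_A, T_X(1_A) = 0; T_G(vw) = T_G(v)·T_G(w) − 2·T_X(T_G(v))·T_X(T_G³(w)) and T_X(vw) = v·T_X(w) + T_X(v)·T_G²(w) for all v, w ∈ A; T_G⁴ = id; T_X∘T_X = 0; σ∘T_G = T_G∘σ; σ∘T_X = −(T_X∘σ); T_G∘T_X = ζ·(T_X∘T_G); δ∘T_X − T_X∘δ = T_G∘T_G − σ; and δ∘T_G − ζ·(T_G∘δ) = 2·(T_X∘T_G)∘(ζ·σ − T_G∘T_G). -/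

import Mathlib

/-- A `T(4,2,1)`-module-algebra structure on `A`, given by the action `σ` of the
grouplike `g` and the action `δ` of the `(g,1)`-skew primitive `x`, where
`g⁴ = 1`, `x² = g² - 1`, `gx = -xg`. -/
def IsT421Action {k A : Type*} [Field k] [CommRing A] [Algebra k A]
    (σ : A ≃ₐ[k] A) (δ : A →ₗ[k] A) : Prop :=
  σ ^ 4 = 1 ∧ δ 1 = 0 ∧
  (∀ a c : A, δ (a * c) = σ a * δ c + δ a * c) ∧
  σ.toLinearMap ∘ₗ δ = -(δ ∘ₗ σ.toLinearMap) ∧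
  δ ∘ₗ δ = σ.toLinearMap ∘ₗ σ.toLinearMap - LinearMap.id

/-- The `T(4,2,1)`-module-algebra structure on `A = k[u]/(u⁴ - 1)` given by
`σ(u) = ζ·u`, `δ(u) = γ·u³` (`γ² = 2ζ`) does NOT extend to a
`D(T(4,2,1))`-module-algebra structure: there are no linear maps `T_G, T_X`
(the actions of the dual generators `G, X`) satisfying the required conditions. -/
theorem stmt_14 (k : Type*) [Field k] [IsAlgClosed k] [CharZero k]
    (ζ : k) (hζ : IsPrimitiveRoot ζ 4)
    (A : Type*) [CommRing A] [Algebra k A]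
    (u : A) (b : Module.Basis (Fin 4) k A) (hb : ∀ i : Fin 4, b i = u ^ (i : ℕ))
    (hu : u ^ 4 = 1)
    (σ : A ≃ₐ[k] A) (δ : A →ₗ[k] A)
    (hact : IsT421Action σ δ)
    (γ : k) (hγ : γ ^ 2 = 2 * ζ)
    (hσu : σ u = ζ • u) (hδu : δ u = γ • u ^ 3) :
    ¬ ∃ (TG TX : A →ₗ[k] A),
        TG 1 = 1 ∧ TX 1 = 0 ∧
        (∀ v w : A, TG (v * w) = TG v * TG w - 2 * (TX (TG v) * TX ((TG ^ 3) w))) ∧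
        (∀ v w : A, TX (v * w) = v * TX w + TX v * (TG ^ 2) w) ∧
        TG ^ 4 = LinearMap.id ∧
        TX ∘ₗ TX = 0 ∧
        σ.toLinearMap ∘ₗ TG = TG ∘ₗ σ.toLinearMap ∧
        σ.toLinearMap ∘ₗ TX = -(TX ∘ₗ σ.toLinearMap) ∧
        TG ∘ₗ TX = ζ • (TX ∘ₗ TG) ∧
        δ ∘ₗ TX - TX ∘ₗ δ = TG ∘ₗ TG - σ.toLinearMap ∧
        δ ∘ₗ TG - ζ • (TG ∘ₗ δ) =
          (2 : k) • ((TX ∘ₗ TG) ∘ₗ (ζ • σ.toLinearMap - TG ∘ₗ TG)) := by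
  rintro ⟨TG, TX, hG1, hX1, hGmul, hXmul, hG4, hXX, hσG, hσX, hGX, hδX, hδG⟩
  -- basic facts about ζ
  have hζ4 : ζ ^ 4 = 1 := hζ.pow_eq_one
  have hζ2 : ζ ^ 2 = -1 := by
    have h2 : ζ ^ 2 ≠ 1 := hζ.pow_ne_one_of_pos_of_lt (by norm_num) (by norm_num)
    have hfac : (ζ ^ 2 - 1) * (ζ ^ 2 + 1) = 0 := by linear_combination hζ4
    rcases mul_eq_zero.mp hfac with h | h
    · exact absurd (by linear_combination h : ζ ^ 2 = 1) h2
    · linear_combination h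
  have hζ0 : ζ ≠ 0 := by
    intro h; rw [h] at hζ2; norm_num at hζ2
  have hζ1 : ζ ≠ 1 := by
    intro h; rw [h] at hζ2; norm_num at hζ2
  have hζn1 : ζ ≠ -1 := by
    intro h; rw [h] at hζ2; norm_num at hζ2
  -- σ on powers of u
  have hσ2 : σ (u ^ 2) = ζ ^ 2 • u ^ 2 := by rw [map_pow, hσu, smul_pow]
  have hσ3 : σ (u ^ 3) = ζ ^ 3 • u ^ 3 := by rw [map_pow, hσu, smul_pow]
  -- representation facts
  have hrepr : ∀ v : A,
      v = b.repr v 0 • (1 : A) + b.repr v 1 • u + b.repr v 2 • u ^ 2 + b.repr v 3 • u ^ 3 := by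
    intro v
    have h := b.sum_repr v
    rw [Fin.sum_univ_four, hb 0, hb 1, hb 2, hb 3] at h
    simpa using h.symm
  have hzero : ∀ a0 a1 a2 a3 : k,
      a0 • (1 : A) + a1 • u + a2 • u ^ 2 + a3 • u ^ 3 = 0 →
      a0 = 0 ∧ a1 = 0 ∧ a2 = 0 ∧ a3 = 0 := by
    intro a0 a1 a2 a3 h
    have hb' : a0 • b 0 + a1 • b 1 + a2 • b 2 + a3 • b 3 = 0 := by
      rw [hb 0, hb 1, hb 2, hb 3]; simpa using h
    have h4 : ∀ i : Fin 4, (b.repr (a0 • b 0 + a1 • b 1 + a2 • b 2 + a3 • b 3)) i = 0 := by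
      rw [hb']; simp
    refine ⟨?_, ?_, ?_, ?_⟩
    · simpa [Finsupp.single_apply] using h4 0
    · simpa [Finsupp.single_apply] using h4 1
    · simpa [Finsupp.single_apply] using h4 2
    · simpa [Finsupp.single_apply] using h4 3
  -- extraction helpers
  have ext1A : ∀ α : k, α • (1 : A) = 0 → α = 0 := by
    intro α h
    have : α • (1 : A) + (0:k) • u + (0:k) • u ^ 2 + (0:k) • u ^ 3 = 0 := by simpa using h
    exact (hzero α 0 0 0 this).1
  have extu : ∀ α : k, α • u = 0 → α = 0 := by
    intro α h
    have : (0:k) • (1 : A) + α • u + (0:k) • u ^ 2 + (0:k) • u ^ 3 = 0 := by simpa using h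
    exact (hzero 0 α 0 0 this).2.1
  have extu2 : ∀ α : k, α • u ^ 2 = 0 → α = 0 := by
    intro α h
    have : (0:k) • (1 : A) + (0:k) • u + α • u ^ 2 + (0:k) • u ^ 3 = 0 := by simpa using h
    exact (hzero 0 0 α 0 this).2.2.1
  -- eigenvector lemma
  have eig : ∀ (v : A) (μ : k), σ v = μ • v →
      (1 - μ) * b.repr v 0 = 0 ∧ (ζ - μ) * b.repr v 1 = 0 ∧
      (ζ ^ 2 - μ) * b.repr v 2 = 0 ∧ (ζ ^ 3 - μ) * b.repr v 3 = 0 := by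
    intro v μ hv
    have h1 : σ v = b.repr v 0 • (1 : A) + (ζ * b.repr v 1) • u +
        (ζ ^ 2 * b.repr v 2) • u ^ 2 + (ζ ^ 3 * b.repr v 3) • u ^ 3 := by
      conv_lhs => rw [hrepr v]
      rw [map_add, map_add, map_add, map_smul, map_smul, map_smul, map_smul,
        map_one, hσu, hσ2, hσ3]
      simp only [smul_smul]
      ring_nf
    have h2 : σ v = (μ * b.repr v 0) • (1 : A) + (μ * b.repr v 1) • u +
        (μ * b.repr v 2) • u ^ 2 + (μ * b.repr v 3) • u ^ 3 := by
      rw [hv]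
      conv_lhs => rw [hrepr v]
      simp only [smul_add, smul_smul]
    have h0 : (b.repr v 0 - μ * b.repr v 0) • (1 : A) + (ζ * b.repr v 1 - μ * b.repr v 1) • u +
        (ζ ^ 2 * b.repr v 2 - μ * b.repr v 2) • u ^ 2 +
        (ζ ^ 3 * b.repr v 3 - μ * b.repr v 3) • u ^ 3 = 0 := by
      have h12 := sub_eq_zero_of_eq (h1.symm.trans h2)
      linear_combination (norm := module) h12
    obtain ⟨e0, e1, e2, e3⟩ := hzero _ _ _ _ h0
    exact ⟨by linear_combination e0, by linear_combination e1,
      by linear_combination e2, by linear_combination e3⟩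
  -- TG u is a multiple of u
  set c1 := b.repr (TG u) 1 with hc1def
  have hTGu : TG u = c1 • u := by
    have hev : σ (TG u) = ζ • TG u := by
      have := DFunLike.congr_fun hσG u
      simp only [LinearMap.comp_apply, AlgEquiv.toLinearMap_apply] at this
      rw [this, hσu, map_smul]
    obtain ⟨e0, e1, e2, e3⟩ := eig (TG u) ζ hev
    have r0 : b.repr (TG u) 0 = 0 := by
      rcases mul_eq_zero.mp e0 with h | h
      · exact absurd (by linear_combination h : (1:k) = ζ) hζ1.symm
      · exact h
    have r2 : b.repr (TG u) 2 = 0 := by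
      rcases mul_eq_zero.mp e2 with h | h
      · exfalso; have := sub_eq_zero.mp h; rw [hζ2] at this
        exact hζn1 this.symm
      · exact h
    have r3 : b.repr (TG u) 3 = 0 := by
      rcases mul_eq_zero.mp e3 with h | h
      · exfalso; have h3 : ζ ^ 3 = ζ := sub_eq_zero.mp h
        have : ζ * (ζ^2 - 1) = 0 := by linear_combination h3
        rcases mul_eq_zero.mp this with h' | h'
        · exact hζ0 h'
        · rw [hζ2] at h'; norm_num at h'
      · exact h
    conv_lhs => rw [hrepr (TG u)]
    rw [r0, r2, r3]; simp; rfl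
  -- TG u^3 is a multiple of u^3
  set c3 := b.repr (TG (u ^ 3)) 3 with hc3def
  have hTGu3 : TG (u ^ 3) = c3 • u ^ 3 := by
    have hev : σ (TG (u ^ 3)) = ζ ^ 3 • TG (u ^ 3) := by
      have := DFunLike.congr_fun hσG (u ^ 3)
      simp only [LinearMap.comp_apply, AlgEquiv.toLinearMap_apply] at this
      rw [this, hσ3, map_smul]
    obtain ⟨e0, e1, e2, e3⟩ := eig (TG (u ^ 3)) (ζ ^ 3) hev
    have hz3 : ζ ^ 3 = -ζ := by linear_combination ζ * hζ2
    have r0 : b.repr (TG (u ^ 3)) 0 = 0 := by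
      rcases mul_eq_zero.mp e0 with h | h
      · exfalso; rw [hz3] at h
        have : ζ = -1 := by linear_combination h
        exact hζn1 this
      · exact h
    have r1 : b.repr (TG (u ^ 3)) 1 = 0 := by
      rcases mul_eq_zero.mp e1 with h | h
      · exfalso; rw [hz3] at h
        have : (2:k) * ζ = 0 := by linear_combination h
        rcases mul_eq_zero.mp this with h' | h'
        · norm_num at h'
        · exact hζ0 h'
      · exact h
    have r2 : b.repr (TG (u ^ 3)) 2 = 0 := by
      rcases mul_eq_zero.mp e2 with h | h
      · exfalso; rw [hz3, hζ2] at h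
        have : ζ = 1 := by linear_combination h
        exact hζ1 this
      · exact h
    conv_lhs => rw [hrepr (TG (u ^ 3))]
    rw [r0, r1, r2]; simp; rfl
  -- TX u is a multiple of u^3
  set d1 := b.repr (TX u) 3 with hd1def
  have hTXu : TX u = d1 • u ^ 3 := by
    have hev : σ (TX u) = (-ζ) • TX u := by
      have := DFunLike.congr_fun hσX u
      simp only [LinearMap.comp_apply, LinearMap.neg_apply, AlgEquiv.toLinearMap_apply] at this
      rw [this, hσu, map_smul, neg_smul]
    obtain ⟨e0, e1, e2, e3⟩ := eig (TX u) (-ζ) hev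
    have r0 : b.repr (TX u) 0 = 0 := by
      rcases mul_eq_zero.mp e0 with h | h
      · exfalso; have : ζ = -1 := by linear_combination h
        exact hζn1 this
      · exact h
    have r1 : b.repr (TX u) 1 = 0 := by
      rcases mul_eq_zero.mp e1 with h | h
      · exfalso
        have : (2:k) * ζ = 0 := by linear_combination h
        rcases mul_eq_zero.mp this with h' | h'
        · norm_num at h'
        · exact hζ0 h'
      · exact h
    have r2 : b.repr (TX u) 2 = 0 := by
      rcases mul_eq_zero.mp e2 with h | h
      · exfalso; rw [hζ2] at h
        have : ζ = 1 := by linear_combination h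
        exact hζ1 this
      · exact h
    conv_lhs => rw [hrepr (TX u)]
    rw [r0, r1, r2]; simp; rfl
  -- TX u^3 is a multiple of u
  set d3 := b.repr (TX (u ^ 3)) 1 with hd3def
  have hTXu3 : TX (u ^ 3) = d3 • u := by
    have hz3 : ζ ^ 3 = -ζ := by linear_combination ζ * hζ2
    have hev : σ (TX (u ^ 3)) = ζ • TX (u ^ 3) := by
      have := DFunLike.congr_fun hσX (u ^ 3)
      simp only [LinearMap.comp_apply, LinearMap.neg_apply, AlgEquiv.toLinearMap_apply] at this
      rw [this, hσ3, map_smul, hz3, neg_smul, neg_neg]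
    obtain ⟨e0, e1, e2, e3⟩ := eig (TX (u ^ 3)) ζ hev
    have r0 : b.repr (TX (u ^ 3)) 0 = 0 := by
      rcases mul_eq_zero.mp e0 with h | h
      · exact absurd (by linear_combination h : (1:k) = ζ) hζ1.symm
      · exact h
    have r2 : b.repr (TX (u ^ 3)) 2 = 0 := by
      rcases mul_eq_zero.mp e2 with h | h
      · exfalso; have := sub_eq_zero.mp h; rw [hζ2] at this
        exact hζn1 this.symm
      · exact h
    have r3 : b.repr (TX (u ^ 3)) 3 = 0 := by
      rcases mul_eq_zero.mp e3 with h | h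
      · exfalso; rw [hz3] at h
        have : (2:k) * ζ = 0 := by linear_combination -h
        rcases mul_eq_zero.mp this with h' | h'
        · norm_num at h'
        · exact hζ0 h'
      · exact h
    conv_lhs => rw [hrepr (TX (u ^ 3))]
    rw [r0, r2, r3]; simp; rfl
  -- (a) d1 * d3 = 0
  have hdd : d1 * d3 = 0 := by
    have := DFunLike.congr_fun hXX u
    simp only [LinearMap.comp_apply, LinearMap.zero_apply] at this
    rw [hTXu, map_smul, hTXu3, smul_smul] at this
    exact extu _ this
  -- (b) d3 + d1 * c3 * c3 = 0
  have hu6 : u ^ 6 = u ^ 2 := by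
    have h : u ^ 6 = u ^ 4 * u ^ 2 := by ring
    rw [h, hu, one_mul]
  have hu4' : u * u ^ 3 = 1 := by
    have h : u * u ^ 3 = u ^ 4 := by ring
    rw [h, hu]
  have hu4'' : u ^ 3 * u = 1 := by
    have h : u ^ 3 * u = u ^ 4 := by ring
    rw [h, hu]
  have hTG2 : (TG ^ 2) (u ^ 3) = (c3 * c3) • u ^ 3 := by
    rw [pow_two, Module.End.mul_apply, hTGu3, map_smul, hTGu3, smul_smul]
  have hTG3 : (TG ^ 3) (u ^ 3) = (c3 * (c3 * c3)) • u ^ 3 := by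
    rw [pow_succ, Module.End.mul_apply, hTGu3, map_smul, hTG2, smul_smul]
  have hbb : d3 + d1 * (c3 * c3) = 0 := by
    have h := hXmul u (u ^ 3)
    rw [hu4', hX1, hTXu3, hTXu, hTG2] at h
    have e1 : u * (d3 • u) = d3 • u ^ 2 := by rw [mul_smul_comm, ← pow_two]
    have e2 : (d1 • u ^ 3) * ((c3 * c3) • u ^ 3) = (d1 * (c3 * c3)) • u ^ 2 := by
      rw [smul_mul_smul_comm, ← pow_add, show (3 + 3 : ℕ) = 6 from rfl, hu6]
    rw [e1, e2, ← add_smul] at h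
    exact extu2 _ h.symm
  -- (c) c1 * c3 = 1
  have hcc : c1 * c3 = 1 := by
    have h := hGmul u (u ^ 3)
    rw [hu4', hG1] at h
    have hXa : TX (TG u) = (c1 * d1) • u ^ 3 := by
      rw [hTGu, map_smul, hTXu, smul_smul]
    have hXb : TX ((TG ^ 3) (u ^ 3)) = (c3 * (c3 * c3) * d3) • u := by
      rw [hTG3, map_smul, hTXu3, smul_smul]
    rw [hXa, hXb, hTGu, hTGu3, smul_mul_smul_comm, smul_mul_smul_comm] at h
    have hc0 : c1 * d1 * (c3 * (c3 * c3) * d3) = 0 := by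
      have e : c1 * d1 * (c3 * (c3 * c3) * d3) = c1 * (c3 * (c3 * c3)) * (d1 * d3) := by ring
      rw [e, hdd, mul_zero]
    rw [hc0, zero_smul, mul_zero, sub_zero, hu4'] at h
    have h' : (c1 * c3 - 1) • (1 : A) = 0 := by
      rw [sub_smul, one_smul, ← h, sub_self]
    have := ext1A _ h'
    linear_combination this
  -- c3 ≠ 0, hence d1 = 0 and d3 = 0
  have hc3ne : c3 ≠ 0 := by
    intro h; rw [h, mul_zero] at hcc; exact one_ne_zero hcc.symm
  have hd1 : d1 = 0 := by
    have h1 : (d1 * c3) * (d1 * c3) = 0 := by linear_combination d1 * hbb - hdd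
    have h2 : d1 * c3 = 0 := mul_self_eq_zero.mp h1
    exact (mul_eq_zero.mp h2).resolve_right hc3ne
  have hd3 : d3 = 0 := by linear_combination hbb - (c3 * c3) * hd1
  have hTXu0 : TX u = 0 := by rw [hTXu, hd1, zero_smul]
  have hTXu30 : TX (u ^ 3) = 0 := by rw [hTXu3, hd3, zero_smul]
  -- (d) c1 * c1 = ζ
  have hc12 : c1 * c1 = ζ := by
    have h := DFunLike.congr_fun hδX u
    simp only [LinearMap.sub_apply, LinearMap.comp_apply, AlgEquiv.toLinearMap_apply] at h
    rw [hTXu0, map_zero, hδu, map_smul, hTXu30, smul_zero, sub_zero, hTGu, map_smul, hTGu,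
      smul_smul, hσu] at h
    have h' : (c1 * c1 - ζ) • u = 0 := by rw [sub_smul, ← h]
    have := extu _ h'
    linear_combination this
  -- (e) c1^4 = 1 and contradiction
  have hc14 : (c1 * c1) * (c1 * c1) = 1 := by
    have h := DFunLike.congr_fun hG4 u
    simp only [LinearMap.id_coe, id_eq] at h
    have p2 : (TG ^ 2) u = (c1 * c1) • u := by
      rw [pow_two, Module.End.mul_apply, hTGu, map_smul, hTGu, smul_smul]
    have p4 : (TG ^ 4) u = ((c1 * c1) * (c1 * c1)) • u := by
      rw [show (4 : ℕ) = 2 + 2 from rfl, pow_add, Module.End.mul_apply, p2, map_smul, p2,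
        smul_smul]
    rw [p4] at h
    have h' : ((c1 * c1) * (c1 * c1) - 1) • u = 0 := by
      rw [sub_smul, one_smul, h, sub_self]
    have := extu _ h'
    linear_combination this
  rw [hc12] at hc14
  have h20 : (2 : k) = 0 := by linear_combination hζ2 - hc14
  exact two_ne_zero h20
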